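/- In the setup below, let T be a bounded operator on ℓ²(Z) of finite propagation. Then: (i) if y ∈ G satisfies d(e,y) > Prop(T) + δ/2, then T̂_y(x) = 0 for all x ∈ G; (ii) for all x,y ∈ G, |T̂_y(x)| ≤ ‖φ‖_∞² · ‖T‖ · Δ(y)^{−1/2}. -/

import Mathlib

open MeasureTheory Metric Bornology Filter Topology
open scoped ENNReal BoundedContinuousFunction

noncomputable section

/-- `ℓ²(X)` over `ℂ`. -/
abbrev l2 (X : Type*) : Type _ := lp (fun _ : X => ℂ) 2

/-- The standard basis vector `δ_x` of `ℓ²(X)`. -/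
def delta {X : Type*} (x : X) : l2 X := by classical exact lp.single 2 x 1

/-- The matrix entry `a_{x,y} = ⟨a δ_y, δ_x⟩` of a bounded operator on `ℓ²(X)`. -/
def entry {X : Type*} (a : l2 X →L[ℂ] l2 X) (x y : X) : ℂ := inner ℂ (delta x) (a (delta y))

/-- `d` is a proper left-invariant metric on the topological group `G` that induces
(is compatible with) its topology. -/
structure IsProperLeftInvariantCompatibleMetric (G : Type*) [Group G] [TopologicalSpace G]
    (d : G → G → ℝ) : Prop where
  refl : ∀ x, d x x = 0
  eq_of : ∀ {x y}, d x y = 0 → x = y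
  symm : ∀ x y, d x y = d y x
  triangle : ∀ x y z, d x z ≤ d x y + d y z
  left_invariant : ∀ g x y, d (g * x) (g * y) = d x y
  compatible : ∀ s : Set G, IsOpen s ↔ ∀ x ∈ s, ∃ ε > 0, ∀ y, d x y < ε → y ∈ s
  proper : ∀ (x : G) (r : ℝ), IsCompact {y : G | d x y ≤ r}

/-- The kernel `T̂` associated to a finite propagation operator `T` on `ℓ²(Z)`:
`T̂_y(x) = ∑_{z,w ∈ Z} φ_z(x) φ_w(xy) T_{z,w} Δ(y)^{-1/2}`, where `φ_z(g) = φ(z⁻¹g)`. -/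
def hatT {G : Type*} [Group G] (Δ : G → ℝ) (φ : G → ℝ) (Z : Set G)
    (T : l2 Z →L[ℂ] l2 Z) (y x : G) : ℂ :=
  ∑' (z : Z) (w : Z),
    ((φ ((z : G)⁻¹ * x) : ℝ) : ℂ) * ((φ ((w : G)⁻¹ * (x * y)) : ℝ) : ℂ) * entry T z w *
      (((Δ y ^ (-(1/2) : ℝ) : ℝ)) : ℂ)

/-- (i) If `d(e,y) > Prop(T) + δ/2` then `T̂_y = 0`;
(ii) `|T̂_y(x)| ≤ ‖φ‖_∞² ‖T‖ Δ(y)^{-1/2}`. -/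
theorem hatT_support_and_bound
    (G : Type*) [Group G] [TopologicalSpace G] [IsTopologicalGroup G]
    [LocallyCompactSpace G] [SecondCountableTopology G] [T2Space G]
    [MeasurableSpace G] [BorelSpace G]
    (μ : Measure G) [μ.IsHaarMeasure]
    (Δ : G → ℝ) (hΔpos : ∀ y : G, 0 < Δ y)
    (hΔ : ∀ y : G, Measure.map (fun x => x * y) μ = ENNReal.ofReal (Δ y)⁻¹ • μ)
    (d : G → G → ℝ) (hd : IsProperLeftInvariantCompatibleMetric G d)
    (Z : Set G)
    (hZulf : ∀ S > (0:ℝ), ∃ N : ℕ, ∀ z ∈ Z,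
      {x ∈ Z | d z x ≤ S}.Finite ∧ {x ∈ Z | d z x ≤ S}.ncard ≤ N)
    (δ : ℝ) (hδpos : 0 < δ)
    (hsep : ∀ z ∈ Z, ∀ w ∈ Z, z ≠ w → δ ≤ d z w)
    (hlat : ∃ R > (0:ℝ), ∀ x : G, ∃ z ∈ Z, d z x ≤ R)
    (φ : G → ℝ) (hφcont : Continuous φ) (hφnn : ∀ g : G, 0 ≤ φ g)
    (hφsupp : ∀ g : G, δ / 4 < d 1 g → φ g = 0)
    (hφnorm : ∫ g, φ g ^ 2 ∂μ = 1)
    (T : l2 Z →L[ℂ] l2 Z) (P : ℝ) (hP : 0 ≤ P)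
    (hT : ∀ z w : Z, P < d z w → entry T z w = 0) :
    (∀ y : G, P + δ / 2 < d 1 y → ∀ x : G, hatT Δ φ Z T y x = 0) ∧
    (∀ Cφ : ℝ, (∀ g : G, φ g ≤ Cφ) →
      ∀ x y : G, ‖hatT Δ φ Z T y x‖ ≤ Cφ ^ 2 * ‖T‖ * Δ y ^ (-(1/2) : ℝ)) := by

  classical
  have hdinv : ∀ z x : G, d 1 (z⁻¹ * x) = d z x := by
    intro z x
    have h := hd.left_invariant z 1 (z⁻¹ * x)
    simpa using h.symm
  have hsupp' : ∀ z x : G, φ (z⁻¹ * x) ≠ 0 → d z x ≤ δ / 4 := by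
    intro z x h
    by_contra hc
    push_neg at hc
    exact h (hφsupp _ (by rwa [hdinv]))
  have hdelta : ∀ w : Z, ‖delta w‖ = 1 := by
    intro w
    have h := lp.norm_single (E := fun _ : Z => ℂ) (p := 2) (by norm_num) w (1 : ℂ)
    rw [norm_one] at h
    rw [show delta w = lp.single 2 w 1 from by
      simp [delta]; congr; funext a b; exact Subsingleton.elim _ _]
    exact h
  have hentry : ∀ z w : Z, ‖entry T z w‖ ≤ ‖T‖ := by
    intro z w
    have h1 : ‖entry T z w‖ ≤ ‖delta z‖ * ‖T (delta w)‖ := norm_inner_le_norm _ _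
    have h2 : ‖T (delta w)‖ ≤ ‖T‖ * ‖delta w‖ := T.le_opNorm _
    rw [hdelta z, one_mul] at h1
    rw [hdelta w, mul_one] at h2
    exact h1.trans h2
  constructor
  · intro y hy x
    have hterm : ∀ z w : Z,
        ((φ ((z : G)⁻¹ * x) : ℝ) : ℂ) * ((φ ((w : G)⁻¹ * (x * y)) : ℝ) : ℂ) * entry T z w *
          (((Δ y ^ (-(1/2) : ℝ) : ℝ)) : ℂ) = 0 := by
      intro z w
      by_cases h1 : φ ((z : G)⁻¹ * x) = 0
      · simp [h1]
      by_cases h2 : φ ((w : G)⁻¹ * (x * y)) = 0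
      · simp [h2]
      have d1 := hsupp' z x h1
      have d2 := hsupp' w (x * y) h2
      have hxy : d x (x * y) = d 1 y := by
        have h := hd.left_invariant x 1 y
        simpa using h
      have tri1 : d x (x * y) ≤ d x (z : G) + d (z : G) (x * y) := hd.triangle _ _ _
      have tri2 : d (z : G) (x * y) ≤ d (z : G) (w : G) + d (w : G) (x * y) := hd.triangle _ _ _
      have hsymm : d x (z : G) = d (z : G) x := hd.symm _ _
      have hzw : P < d (z : G) (w : G) := by linarith
      rw [hT z w hzw]
      ring
    rw [hatT]
    calc (∑' (z : Z) (w : Z),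
        ((φ ((z : G)⁻¹ * x) : ℝ) : ℂ) * ((φ ((w : G)⁻¹ * (x * y)) : ℝ) : ℂ) * entry T z w *
          (((Δ y ^ (-(1/2) : ℝ) : ℝ)) : ℂ))
        = ∑' (_ : Z) (_ : Z), (0 : ℂ) :=
          tsum_congr fun z => tsum_congr fun w => hterm z w
      _ = 0 := by simp
  · intro Cφ hCφ x y
    have hCφ0 : 0 ≤ Cφ := (hφnn 1).trans (hCφ 1)
    have hΔy : 0 < Δ y ^ (-(1/2) : ℝ) := Real.rpow_pos_of_pos (hΔpos y) _
    have hRHS : 0 ≤ Cφ ^ 2 * ‖T‖ * Δ y ^ (-(1/2) : ℝ) := by positivity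
    have htermbound : ∀ z w : Z,
        ‖((φ ((z : G)⁻¹ * x) : ℝ) : ℂ) * ((φ ((w : G)⁻¹ * (x * y)) : ℝ) : ℂ) * entry T z w *
          (((Δ y ^ (-(1/2) : ℝ) : ℝ)) : ℂ)‖ ≤ Cφ ^ 2 * ‖T‖ * Δ y ^ (-(1/2) : ℝ) := by
      intro z w
      have h1 : ‖(((φ ((z : G)⁻¹ * x)) : ℝ) : ℂ)‖ = φ ((z : G)⁻¹ * x) := by
        rw [Complex.norm_real, Real.norm_of_nonneg (hφnn _)]
      have h2 : ‖(((φ ((w : G)⁻¹ * (x * y))) : ℝ) : ℂ)‖ = φ ((w : G)⁻¹ * (x * y)) := by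
        rw [Complex.norm_real, Real.norm_of_nonneg (hφnn _)]
      have h3 : ‖(((Δ y ^ (-(1/2) : ℝ) : ℝ)) : ℂ)‖ = Δ y ^ (-(1/2) : ℝ) := by
        rw [Complex.norm_real, Real.norm_of_nonneg hΔy.le]
      rw [norm_mul, norm_mul, norm_mul, h1, h2, h3]
      have := hentry z w
      have goal : φ ((z : G)⁻¹ * x) * φ ((w : G)⁻¹ * (x * y)) * ‖entry T z w‖ *
          Δ y ^ (-(1/2) : ℝ) ≤ Cφ * Cφ * ‖T‖ * Δ y ^ (-(1/2) : ℝ) := by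
        gcongr <;> first | exact hφnn _ | exact hCφ _ | exact this
      calc φ ((z : G)⁻¹ * x) * φ ((w : G)⁻¹ * (x * y)) * ‖entry T z w‖ * Δ y ^ (-(1/2) : ℝ)
          ≤ Cφ * Cφ * ‖T‖ * Δ y ^ (-(1/2) : ℝ) := goal
        _ = Cφ ^ 2 * ‖T‖ * Δ y ^ (-(1/2) : ℝ) := by ring
    rw [hatT]
    by_cases hex : ∃ z : Z, φ ((z : G)⁻¹ * x) ≠ 0
    · obtain ⟨z₀, hz₀⟩ := hex
      have houter : ∀ z : Z, z ≠ z₀ →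
          (∑' (w : Z), ((φ ((z : G)⁻¹ * x) : ℝ) : ℂ) * ((φ ((w : G)⁻¹ * (x * y)) : ℝ) : ℂ) *
            entry T z w * (((Δ y ^ (-(1/2) : ℝ) : ℝ)) : ℂ)) = 0 := by
        intro z hz
        have hφz : φ ((z : G)⁻¹ * x) = 0 := by
          by_contra h
          have d1 := hsupp' z x h
          have d2 := hsupp' z₀ x hz₀
          have tri : d (z : G) (z₀ : G) ≤ d (z : G) x + d x (z₀ : G) := hd.triangle _ _ _
          have hsymm : d x (z₀ : G) = d (z₀ : G) x := hd.symm _ _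
          have hne : (z : G) ≠ (z₀ : G) := fun q => hz (Subtype.ext q)
          have := hsep z z.2 z₀ z₀.2 hne
          linarith
        calc (∑' (w : Z), ((φ ((z : G)⁻¹ * x) : ℝ) : ℂ) * ((φ ((w : G)⁻¹ * (x * y)) : ℝ) : ℂ) *
              entry T z w * (((Δ y ^ (-(1/2) : ℝ) : ℝ)) : ℂ))
            = ∑' (_ : Z), (0 : ℂ) := tsum_congr fun w => by simp [hφz]
          _ = 0 := by simp
      rw [tsum_eq_single z₀ houter]
      by_cases hexw : ∃ w : Z, φ ((w : G)⁻¹ * (x * y)) ≠ 0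
      · obtain ⟨w₀, hw₀⟩ := hexw
        have hinner : ∀ w : Z, w ≠ w₀ →
            ((φ ((z₀ : G)⁻¹ * x) : ℝ) : ℂ) * ((φ ((w : G)⁻¹ * (x * y)) : ℝ) : ℂ) *
              entry T z₀ w * (((Δ y ^ (-(1/2) : ℝ) : ℝ)) : ℂ) = 0 := by
          intro w hw
          have hφw : φ ((w : G)⁻¹ * (x * y)) = 0 := by
            by_contra h
            have d1 := hsupp' w (x * y) h
            have d2 := hsupp' w₀ (x * y) hw₀
            have tri : d (w : G) (w₀ : G) ≤ d (w : G) (x * y) + d (x * y) (w₀ : G) :=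
              hd.triangle _ _ _
            have hsymm : d (x * y) (w₀ : G) = d (w₀ : G) (x * y) := hd.symm _ _
            have hne : (w : G) ≠ (w₀ : G) := fun q => hw (Subtype.ext q)
            have := hsep w w.2 w₀ w₀.2 hne
            linarith
          simp [hφw]
        rw [tsum_eq_single w₀ hinner]
        exact htermbound z₀ w₀
      · push_neg at hexw
        have : (∑' (w : Z), ((φ ((z₀ : G)⁻¹ * x) : ℝ) : ℂ) * ((φ ((w : G)⁻¹ * (x * y)) : ℝ) : ℂ) *
              entry T z₀ w * (((Δ y ^ (-(1/2) : ℝ) : ℝ)) : ℂ)) = 0 := by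
          calc _ = ∑' (_ : Z), (0 : ℂ) := tsum_congr fun w => by simp [hexw w]
            _ = 0 := by simp
        rw [this]
        rw [norm_zero]
        exact hRHS
    · push_neg at hex
      have : (∑' (z : Z) (w : Z), ((φ ((z : G)⁻¹ * x) : ℝ) : ℂ) *
            ((φ ((w : G)⁻¹ * (x * y)) : ℝ) : ℂ) * entry T z w *
            (((Δ y ^ (-(1/2) : ℝ) : ℝ)) : ℂ)) = 0 := by
        calc _ = ∑' (_ : Z) (_ : Z), (0 : ℂ) :=
              tsum_congr fun z => tsum_congr fun w => by simp [hex z]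
          _ = 0 := by simp
      rw [this]
      rw [norm_zero]
      exact hRHS
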